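/- For all natural numbers i ≥ 1 and n with n ≥ α_i, one has (n/α_i)^{n/α_i} / ⌊n/α_i⌋^{⌊n/α_i⌋} < (10·n/α_i)^{(α_i − 1)/α_i} (as real numbers). -/

import Mathlib

/-- Auxiliary: `alphaAux i` is `α_{i+1}`, with `α_1 = 2` and
`α_{i+1} = α_i² - α_i + 1`. -/
def alphaAux : ℕ → ℕ
  | 0 => 2
  | i + 1 => alphaAux i ^ 2 - alphaAux i + 1

/-- The sequence `α_1 = 2, α_2 = 3, α_3 = 7, α_4 = 43, ...`, indexed from `1`. -/
def alphaSeq (i : ℕ) : ℕ := alphaAux (i - 1)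

lemma alphaAux_two_le (k : ℕ) : 2 ≤ alphaAux k := by
  induction k with
  | zero => simp [alphaAux]
  | succ k ih =>
    have h : 2 * alphaAux k ≤ alphaAux k * alphaAux k := Nat.mul_le_mul_right _ ih
    have : alphaAux (k + 1) = alphaAux k ^ 2 - alphaAux k + 1 := rfl
    rw [this, pow_two]
    omega

open Real in
/-- For `i ≥ 1` and `n ≥ α_i`,
`(n/α_i)^(n/α_i) / ⌊n/α_i⌋^⌊n/α_i⌋ < (10 n / α_i)^((α_i - 1)/α_i)`. -/
theorem analysis_ineq (i n : ℕ) (hi : 1 ≤ i) (hn : alphaSeq i ≤ n) :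
    ((n : ℝ) / (alphaSeq i : ℝ)) ^ ((n : ℝ) / (alphaSeq i : ℝ)) /
        ((n / alphaSeq i : ℕ) : ℝ) ^ (n / alphaSeq i : ℕ)
      < (10 * (n : ℝ) / (alphaSeq i : ℝ)) ^ (((alphaSeq i : ℝ) - 1) / (alphaSeq i : ℝ)) := by
  set a : ℕ := alphaSeq i with ha
  have ha2 : 2 ≤ a := alphaAux_two_le _
  have hA : (2:ℝ) ≤ (a:ℝ) := by exact_mod_cast ha2
  have hA0 : (0:ℝ) < (a:ℝ) := by linarith
  set X : ℝ := (n:ℝ) / (a:ℝ) with hX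
  set Q : ℕ := n / a with hQ
  have hQ1 : 1 ≤ Q := (Nat.one_le_div_iff (by omega)).mpr hn
  have hQr : (1:ℝ) ≤ (Q:ℝ) := by exact_mod_cast hQ1
  have hQX : ((Q:ℝ)) ≤ X := Nat.cast_div_le
  have hX1 : (1:ℝ) ≤ X := le_trans hQr hQX
  have hX0 : (0:ℝ) < X := by linarith
  have hQr0 : (0:ℝ) < (Q:ℝ) := by linarith
  set f : ℝ := X - (Q:ℝ) with hf
  have hf0 : 0 ≤ f := by simp [hf]; linarith
  have hncast : (n : ℝ) = (a:ℝ) * (Q:ℝ) + ((n % a : ℕ) : ℝ) := by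
    exact_mod_cast congrArg (Nat.cast : ℕ → ℝ) (Nat.div_add_mod n a).symm
  have hfval : f = ((n % a : ℕ) : ℝ) / (a:ℝ) := by
    rw [hf, hX, hncast]
    field_simp
    ring
  have hmod : ((n % a : ℕ) : ℝ) ≤ (a:ℝ) - 1 := by
    have h1 : n % a ≤ a - 1 := by
      have := Nat.mod_lt n (show 0 < a by omega); omega
    have h2 : ((n % a : ℕ) : ℝ) ≤ ((a - 1 : ℕ) : ℝ) := by exact_mod_cast h1
    rwa [Nat.cast_sub (by omega), Nat.cast_one] at h2
  have hfle : f ≤ ((a:ℝ) - 1) / (a:ℝ) := by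
    rw [hfval]
    gcongr
  -- split X^X
  have hsplit : X ^ X = X ^ Q * X ^ f := by
    have : X = (Q:ℝ) + f := by rw [hf]; ring
    calc X ^ X = X ^ ((Q:ℝ) + f) := by rw [← this]
      _ = X ^ ((Q:ℝ)) * X ^ f := Real.rpow_add hX0 _ _
      _ = X ^ Q * X ^ f := by rw [Real.rpow_natCast]
  have key1 : (X / (Q:ℝ)) ^ Q ≤ Real.exp f := by
    have h1 : X / (Q:ℝ) = 1 + f / (Q:ℝ) := by rw [hf]; field_simp; ring
    have h2 : 1 + f / (Q:ℝ) ≤ Real.exp (f / (Q:ℝ)) := by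
      have := Real.add_one_le_exp (f / (Q:ℝ)); linarith
    have h3 : (X / (Q:ℝ)) ^ Q ≤ (Real.exp (f / (Q:ℝ))) ^ Q := by
      apply pow_le_pow_left₀ (by positivity) (h1 ▸ h2)
    calc (X / (Q:ℝ)) ^ Q ≤ (Real.exp (f / (Q:ℝ))) ^ Q := h3
      _ = Real.exp ((Q:ℝ) * (f / (Q:ℝ))) := (Real.exp_nat_mul _ _).symm
      _ = Real.exp f := by rw [mul_div_cancel₀ _ (ne_of_gt hQr0)]
  have hdiv : X ^ X / (Q:ℝ) ^ Q = (X / (Q:ℝ)) ^ Q * X ^ f := by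
    rw [hsplit, div_pow]; ring
  have hXf0 : 0 ≤ X ^ f := by positivity
  have key2 : X ^ X / (Q:ℝ) ^ Q ≤ (Real.exp 1 * X) ^ f := by
    rw [hdiv, Real.mul_rpow (Real.exp_pos 1).le hX0.le, Real.exp_one_rpow]
    exact mul_le_mul_of_nonneg_right key1 hXf0
  have he1 : (1:ℝ) ≤ Real.exp 1 * X := by
    have hE : (1:ℝ) ≤ Real.exp 1 := Real.one_le_exp zero_le_one
    nlinarith
  have key3 : (Real.exp 1 * X) ^ f ≤ (Real.exp 1 * X) ^ (((a:ℝ) - 1) / (a:ℝ)) :=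
    Real.rpow_le_rpow_of_exponent_le he1 hfle
  have hp0 : 0 < ((a:ℝ) - 1) / (a:ℝ) := by
    apply div_pos <;> linarith
  have key4 : (Real.exp 1 * X) ^ (((a:ℝ) - 1) / (a:ℝ))
      < (10 * X) ^ (((a:ℝ) - 1) / (a:ℝ)) := by
    apply Real.rpow_lt_rpow (by positivity) _ hp0
    have : Real.exp 1 < 10 := lt_trans Real.exp_one_lt_d9 (by norm_num)
    nlinarith
  have hfin : 10 * (n:ℝ) / (a:ℝ) = 10 * X := by rw [hX]; ring
  calc X ^ X / (Q:ℝ) ^ Q ≤ (Real.exp 1 * X) ^ (((a:ℝ) - 1) / (a:ℝ)) := key2.trans key3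
    _ < (10 * X) ^ (((a:ℝ) - 1) / (a:ℝ)) := key4
    _ = (10 * (n:ℝ) / (a:ℝ)) ^ (((a:ℝ) - 1) / (a:ℝ)) := by rw [hfin]
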